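/- Let A₁ and A₂ be disjoint finite alphabets, and let R₁ and R₂ be rewriting systems on A₁ and A₂ respectively, regarded (via the inclusions A₁*, A₂* ⊆ (A₁ ∪ A₂)*) as rewriting systems on the alphabet A₁ ∪ A₂. If (A₁, R₁) and (A₂, R₂) are both complete (terminating and confluent), then the union system (A₁ ∪ A₂, R₁ ∪ R₂) is complete. (This union presents the free product of the monoids presented by ⟨A₁ | R₁⟩ and ⟨A₂ | R₂⟩.) -/

import Mathlib

/-- Single-step reduction of a string rewriting system `R`:
`u →_R v` iff `u = xℓy` and `v = xry` for some rule `(ℓ, r) ∈ R`. -/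
def Step {α : Type*} (R : Set (List α × List α)) (u v : List α) : Prop :=
  ∃ x y l r, (l, r) ∈ R ∧ u = x ++ l ++ y ∧ v = x ++ r ++ y

/-- `Over A w` means the word `w` is a word over the (sub)alphabet `A`. -/
def Over {α : Type*} (A : Set α) (w : List α) : Prop := ∀ x ∈ w, x ∈ A

namespace S13

variable {α : Type*}

lemma over_append {A : Set α} {x y : List α} :
    Over A (x ++ y) ↔ Over A x ∧ Over A y := by
  constructor
  · intro h
    exact ⟨fun a ha => h a (List.mem_append_left _ ha),
      fun a ha => h a (List.mem_append_right _ ha)⟩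
  · rintro ⟨h1, h2⟩ a ha
    rcases List.mem_append.mp ha with h | h
    · exact h1 a h
    · exact h2 a h

lemma over_mono {A B : Set α} (h : A ⊆ B) {x : List α} (hx : Over A x) : Over B x :=
  fun a ha => h (hx a ha)

lemma step_mono {R S : Set (List α × List α)} (h : R ⊆ S) {u v : List α}
    (hs : Step R u v) : Step S u v := by
  obtain ⟨x, y, l, r, hm, h1, h2⟩ := hs
  exact ⟨x, y, l, r, h hm, h1, h2⟩

lemma step_union {R₁ R₂ : Set (List α × List α)} {u v : List α} :
    Step (R₁ ∪ R₂) u v ↔ Step R₁ u v ∨ Step R₂ u v := by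
  constructor
  · rintro ⟨x, y, l, r, (hm | hm), h1, h2⟩
    · exact Or.inl ⟨x, y, l, r, hm, h1, h2⟩
    · exact Or.inr ⟨x, y, l, r, hm, h1, h2⟩
  · rintro (h | h)
    · exact step_mono Set.subset_union_left h
    · exact step_mono Set.subset_union_right h

lemma step_append_left {R : Set (List α × List α)} {u v : List α} (p : List α)
    (h : Step R u v) : Step R (p ++ u) (p ++ v) := by
  obtain ⟨x, y, l, r, hm, h1, h2⟩ := h
  exact ⟨p ++ x, y, l, r, hm, by simp [h1], by simp [h2]⟩

lemma step_append_right {R : Set (List α × List α)} {u v : List α} (p : List α)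
    (h : Step R u v) : Step R (u ++ p) (v ++ p) := by
  obtain ⟨x, y, l, r, hm, h1, h2⟩ := h
  exact ⟨x, y ++ p, l, r, hm, by simp [h1], by simp [h2]⟩

lemma rtg_append_left {R : Set (List α × List α)} {u v : List α} (p : List α)
    (h : Relation.ReflTransGen (Step R) u v) :
    Relation.ReflTransGen (Step R) (p ++ u) (p ++ v) := by
  induction h with
  | refl => exact Relation.ReflTransGen.refl
  | tail _ hstep ih => exact ih.tail (step_append_left p hstep)

lemma rtg_append_right {R : Set (List α × List α)} {u v : List α} (p : List α)
    (h : Relation.ReflTransGen (Step R) u v) :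
    Relation.ReflTransGen (Step R) (u ++ p) (v ++ p) := by
  induction h with
  | refl => exact Relation.ReflTransGen.refl
  | tail _ hstep ih => exact ih.tail (step_append_right p hstep)

lemma redex_getElem {u x l y : List α} (hu : u = x ++ l ++ y) {j : ℕ}
    (h1 : x.length ≤ j) (h2 : j < x.length + l.length) :
    ∃ a, u[j]? = some a ∧ a ∈ l := by
  have hjl : j - x.length < l.length := by omega
  have : u[j]? = l[j - x.length]? := by
    rw [hu, List.append_assoc, List.getElem?_append_right h1,
      List.getElem?_append_left hjl]
  have ha : l[j - x.length]? = some (l[j - x.length]'hjl) :=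
    List.getElem?_eq_some_iff.mpr ⟨hjl, rfl⟩
  exact ⟨_, by rw [this, ha], List.mem_of_getElem? ha⟩

lemma redex_prefix {x₁ l₁ y₁ x₂ l₂ y₂ : List α}
    (h : x₁ ++ l₁ ++ y₁ = x₂ ++ l₂ ++ y₂)
    (hlen : x₁.length + l₁.length ≤ x₂.length) :
    ∃ m, x₂ = x₁ ++ l₁ ++ m ∧ y₁ = m ++ l₂ ++ y₂ := by
  have hp1 : (x₁ ++ l₁) <+: (x₂ ++ l₂ ++ y₂) := ⟨y₁, by rw [← h]⟩
  have hp2 : x₂ <+: (x₂ ++ l₂ ++ y₂) := ⟨l₂ ++ y₂, by simp⟩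
  have hp : (x₁ ++ l₁) <+: x₂ :=
    List.prefix_of_prefix_length_le hp1 hp2 (by simpa using hlen)
  obtain ⟨m, hm⟩ := hp
  refine ⟨m, by rw [← hm, List.append_assoc], ?_⟩
  rw [← hm] at h
  simpa using h

/-- Two non-overlapping redexes. -/
lemma two_redex {x₁ l₁ y₁ x₂ l₂ y₂ : List α}
    (h : x₁ ++ l₁ ++ y₁ = x₂ ++ l₂ ++ y₂)
    (h₁ : l₁ ≠ []) (h₂ : l₂ ≠ [])
    (hdis : ∀ a ∈ l₁, a ∉ l₂) :
    (∃ m, x₂ = x₁ ++ l₁ ++ m ∧ y₁ = m ++ l₂ ++ y₂) ∨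
    (∃ m, x₁ = x₂ ++ l₂ ++ m ∧ y₂ = m ++ l₁ ++ y₁) := by
  rcases le_or_gt (x₁.length + l₁.length) x₂.length with hle | hlt
  · exact Or.inl (redex_prefix h hle)
  rcases le_or_gt (x₂.length + l₂.length) x₁.length with hle | hlt'
  · exact Or.inr (redex_prefix h.symm hle)
  -- overlap: contradiction
  exfalso
  set j := max x₁.length x₂.length with hj
  have hj1 : x₁.length ≤ j := le_max_left _ _
  have hj2 : x₂.length ≤ j := le_max_right _ _
  have hj1' : j < x₁.length + l₁.length := max_lt (by
      have := List.length_pos_iff.mpr h₁; omega) hlt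
  have hj2' : j < x₂.length + l₂.length := max_lt hlt' (by
      have := List.length_pos_iff.mpr h₂; omega)
  obtain ⟨a, ha, hal⟩ := redex_getElem (u := x₁ ++ l₁ ++ y₁) rfl hj1 hj1'
  obtain ⟨b, hb, hbl⟩ := redex_getElem (u := x₂ ++ l₂ ++ y₂) rfl hj2 hj2'
  rw [h] at ha
  rw [ha] at hb
  cases hb
  exact hdis a hal hbl


/-- Splitting a step at a marker letter not occurring in any LHS. -/
lemma split_step {R : Set (List α × List α)} {A : Set α}
    (hR : ∀ p ∈ R, Over A p.1 ∧ Over A p.2)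
    (hne : ∀ p ∈ R, p.1 ≠ []) {p q v : List α} {a : α} (ha : a ∉ A)
    (h : Step R (p ++ a :: q) v) :
    (∃ p', Step R p p' ∧ v = p' ++ a :: q) ∨
    (∃ q', Step R q q' ∧ v = p ++ a :: q') := by
  obtain ⟨x, y, l, r, hm, h1, h2⟩ := h
  have h1' : x ++ l ++ y = p ++ [a] ++ q := by simpa using h1.symm
  have hd : ∀ b ∈ l, b ∉ [a] := by
    intro b hb hba
    simp only [List.mem_singleton] at hba
    exact ha (hba ▸ (hR _ hm).1 b hb)
  rcases two_redex h1' (hne _ hm) (by simp) hd with ⟨m, hm1, hm2⟩ | ⟨m, hm1, hm2⟩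
  · -- p = x ++ l ++ m, y = m ++ [a] ++ q
    refine Or.inl ⟨x ++ r ++ m, ⟨x, m, l, r, hm, by rw [hm1], by simp⟩, ?_⟩
    rw [h2, hm2]
    simp
  · -- x = p ++ [a] ++ m, q = m ++ l ++ y
    refine Or.inr ⟨m ++ r ++ y, ⟨m, y, l, r, hm, by rw [hm2], by simp⟩, ?_⟩
    rw [h2, hm1]
    simp

/-- Rules of a terminating system have nonempty left-hand sides. -/
lemma lhs_ne_nil {R : Set (List α × List α)} {A : Set α}
    (hR : ∀ p ∈ R, Over A p.1 ∧ Over A p.2)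
    (hterm : ¬ ∃ f : ℕ → List α,
      (∀ n : ℕ, Over A (f n)) ∧ ∀ n : ℕ, Step R (f n) (f (n + 1))) :
    ∀ p ∈ R, p.1 ≠ [] := by
  rintro ⟨l, r⟩ hm hl
  subst hl
  refine hterm ⟨fun n => (List.replicate n r).flatten, fun n => ?_, fun n => ?_⟩
  · intro x hx
    rw [List.mem_flatten] at hx
    obtain ⟨t, ht, hxt⟩ := hx
    rw [List.eq_of_mem_replicate ht] at hxt
    exact (hR _ hm).2 x hxt
  · refine ⟨(List.replicate n r).flatten, [], [], r, hm, by simp, ?_⟩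
    show (List.replicate (n + 1) r).flatten = _
    rw [List.replicate_succ' (n := n) (a := r)]
    simp

/-- A step preserves being a word over the (combined) alphabet. -/
lemma step_over {R : Set (List α × List α)} {A U : Set α}
    (hR : ∀ p ∈ R, Over A p.1 ∧ Over A p.2) (hAU : A ⊆ U) {u v : List α}
    (hu : Over U u) (h : Step R u v) : Over U v := by
  obtain ⟨x, y, l, r, hm, h1, h2⟩ := h
  subst h1 h2
  rw [over_append, over_append] at hu ⊢
  exact ⟨⟨hu.1.1, over_mono hAU (hR _ hm).2⟩, hu.2⟩

/-- From "no infinite chain over A" to accessibility. -/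
lemma acc_of_no_chain {R : Set (List α × List α)} {A : Set α}
    (hterm : ¬ ∃ f : ℕ → List α,
      (∀ n : ℕ, Over A (f n)) ∧ ∀ n : ℕ, Step R (f n) (f (n + 1))) :
    ∀ u : List α, Acc (fun v u => Step R u v ∧ Over A u) u := by
  by_contra hna
  push_neg at hna
  obtain ⟨u₀, hu₀⟩ := hna
  have key : ∀ u, ¬ Acc (fun v u => Step R u v ∧ Over A u) u →
      ∃ v, (Step R u v ∧ Over A u) ∧ ¬ Acc (fun v u => Step R u v ∧ Over A u) v := by
    intro u hu
    by_contra hc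
    push_neg at hc
    exact hu (Acc.intro u fun v hv => hc v hv)
  choose g hg1 hg2 using key
  let f : ℕ → {u : List α // ¬ Acc (fun v u => Step R u v ∧ Over A u) u} :=
    fun n => Nat.rec ⟨u₀, hu₀⟩ (fun _ p => ⟨g p.1 p.2, hg2 p.1 p.2⟩) n
  refine hterm ⟨fun n => (f n).1, fun n => ?_, fun n => ?_⟩
  · exact (hg1 (f n).1 (f n).2).2
  · exact (hg1 (f n).1 (f n).2).1

/-- No infinite chain from an accessible element. -/
lemma no_chain_of_acc {r : List α → List α → Prop} {u : List α}
    (h : Acc (fun v u => r u v) u) :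
    ∀ f : ℕ → List α, f 0 = u → ¬ ∀ n, r (f n) (f (n + 1)) := by
  induction h with
  | intro u _ ih =>
    intro f hf0 hch
    exact ih (f 1) (hf0 ▸ hch 0) (fun n => f (n + 1)) rfl (fun n => hch (n + 1))


/-! ### Counting boundaries in boolean lists -/

def bnd : List Bool → ℕ
  | [] => 0
  | [_] => 0
  | a :: b :: t => (if a = b then 0 else 1) + bnd (b :: t)

def ebd : Option Bool → Option Bool → ℕ
  | some a, some b => if a = b then 0 else 1
  | _, _ => 0

lemma ebd_none_left (b : Option Bool) : ebd none b = 0 := by cases b <;> rfl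
lemma ebd_none_right (a : Option Bool) : ebd a none = 0 := by cases a <;> rfl

lemma ebd_triangle (a b : Option Bool) (c : Bool) :
    ebd a b ≤ ebd a (some c) + ebd (some c) b := by
  rcases a with _ | a
  · rw [ebd_none_left, ebd_none_left]; omega
  rcases b with _ | b
  · rw [ebd_none_right, ebd_none_right]; omega
  show (if a = b then 0 else 1) ≤ (if a = c then 0 else 1) + (if c = b then 0 else 1)
  rcases eq_or_ne a b with h | h
  · simp [h]
  · rcases eq_or_ne a c with h1 | h1
    · subst h1
      simp [Ne.symm h]
    · simp [h, h1]

lemma bnd_cons (a : Bool) (Y : List Bool) :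
    bnd (a :: Y) = bnd Y + ebd (some a) Y.head? := by
  cases Y with
  | nil => rfl
  | cons b t => show (if a = b then 0 else 1) + bnd (b :: t) = _; rw [Nat.add_comm]; rfl

lemma bnd_append (X Y : List Bool) :
    bnd (X ++ Y) = bnd X + bnd Y + ebd X.getLast? Y.head? := by
  induction X with
  | nil => simp [bnd, ebd_none_left]
  | cons a X ih =>
    cases X with
    | nil =>
      simp only [List.nil_append, List.singleton_append]
      rw [bnd_cons]
      show _ = bnd [a] + bnd Y + ebd (some a) Y.head?
      simp only [bnd]
      omega
    | cons a' T =>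
      show (if a = a' then 0 else 1) + bnd (a' :: T ++ Y) = ((if a = a' then 0 else 1) + bnd (a' :: T)) + bnd Y + ebd ((a :: a' :: T).getLast? ) Y.head?
      rw [ih]
      have : (a :: a' :: T).getLast? = (a' :: T).getLast? := by
        rw [List.getLast?_cons_cons]
      rw [this]
      omega

lemma bnd_replicate (n : ℕ) (c : Bool) : bnd (List.replicate n c) = 0 := by
  induction n with
  | zero => rfl
  | succ n ih =>
    cases n with
    | zero => rfl
    | succ m =>
      rw [List.replicate_succ]
      rw [show List.replicate (m + 1) c = c :: List.replicate m c from List.replicate_succ .. ] at ih ⊢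
      show (if c = c then 0 else 1) + bnd (c :: List.replicate m c) = 0
      simpa using ih

lemma head?_replicate (n : ℕ) (c : Bool) (hn : n ≠ 0) :
    (List.replicate n c).head? = some c := by
  cases n with
  | zero => omega
  | succ m => rw [List.replicate_succ]; rfl

lemma getLast?_replicate (n : ℕ) (c : Bool) (hn : n ≠ 0) :
    (List.replicate n c).getLast? = some c := by
  cases n with
  | zero => omega
  | succ m =>
    rw [List.replicate_succ']
    simp

/-- Replacing a nonempty constant block by any constant block (same value)
does not increase the boundary count. -/
lemma head?_append_left {l l' : List Bool} (h : l ≠ []) :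
    (l ++ l').head? = l.head? := by
  cases l with
  | nil => exact absurd rfl h
  | cons a t => rfl

lemma bnd_le (X Y : List Bool) (c : Bool) (m k : ℕ) (hm : m ≠ 0) :
    bnd (X ++ List.replicate k c ++ Y) ≤ bnd (X ++ List.replicate m c ++ Y) := by
  have hrep : List.replicate m c ≠ [] := by
    cases m with
    | zero => omega
    | succ k => simp [List.replicate_succ]
  rw [List.append_assoc, List.append_assoc, bnd_append, bnd_append,
    bnd_append X (List.replicate m c ++ Y), bnd_append (List.replicate m c) Y,
    bnd_replicate, bnd_replicate, getLast?_replicate m c hm,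
    head?_append_left hrep, head?_replicate m c hm]
  cases k with
  | zero =>
    simp only [List.replicate_zero, List.nil_append, ebd_none_left, List.getLast?_nil]
    have := ebd_triangle X.getLast? Y.head? c
    omega
  | succ k' =>
    have hrep' : List.replicate (k' + 1) c ≠ [] := by simp [List.replicate_succ]
    rw [head?_append_left hrep', head?_replicate _ c (by omega),
      getLast?_replicate _ c (by omega)]

lemma bnd_zero_all_eq {L : List Bool} (h : bnd L = 0) :
    ∀ a ∈ L, ∀ b ∈ L, a = b := by
  induction L with
  | nil => simp
  | cons a T ih =>
    cases T with
    | nil => simp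
    | cons a' T' =>
      have h' : a = a' ∧ bnd (a' :: T') = 0 := by
        by_cases hd : a = a' <;> simp [bnd, hd] at h ⊢
        · exact h
      intro x hx y hy
      have hmem : ∀ z ∈ a :: a' :: T', z = a' := by
        intro z hz
        rcases List.mem_cons.mp hz with rfl | hz'
        · exact h'.1
        · exact ih h'.2 z hz' a' (by simp)
      rw [hmem x hx, hmem y hy]

lemma bnd_pos_split {L : List Bool} (h : bnd L ≠ 0) :
    ∃ P a b Q, L = P ++ [a] ++ (b :: Q) ∧ a ≠ b := by
  induction L with
  | nil => simp [bnd] at h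
  | cons x T ih =>
    cases T with
    | nil => simp [bnd] at h
    | cons y T' =>
      by_cases hxy : x = y
      · have h' : bnd (y :: T') ≠ 0 := by
          simp [bnd, hxy] at h
          simpa using h
        obtain ⟨P, a, b, Q, hL, hab⟩ := ih h'
        exact ⟨x :: P, a, b, Q, by rw [List.cons_append, List.cons_append, ← hL], hab⟩
      · exact ⟨[], x, y, T', by simp, hxy⟩


/-! ### Word-level boundary counting -/

open Classical in
noncomputable def chi (A : Set α) : α → Bool := fun x => decide (x ∈ A)

lemma chi_eq_true {A : Set α} {x : α} : chi A x = true ↔ x ∈ A := by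
  simp [chi]

lemma chi_eq_false {A : Set α} {x : α} : chi A x = false ↔ x ∉ A := by
  simp [chi]

noncomputable def Nb (A : Set α) (w : List α) : ℕ := bnd (w.map (chi A))

lemma map_chi_replicate {A : Set α} {l : List α} {cv : Bool}
    (h : ∀ x ∈ l, chi A x = cv) :
    l.map (chi A) = List.replicate l.length cv := by
  rw [List.eq_replicate_iff]
  constructor
  · simp
  · intro b hb
    obtain ⟨x, hx, rfl⟩ := List.mem_map.mp hb
    exact h x hx

lemma Nb_mono {A : Set α} {R : Set (List α × List α)}
    (hRc : ∀ p ∈ R, ∃ cv : Bool, (∀ x ∈ p.1, chi A x = cv) ∧ (∀ x ∈ p.2, chi A x = cv))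
    (hne : ∀ p ∈ R, p.1 ≠ []) {u v : List α} (h : Step R u v) :
    Nb A v ≤ Nb A u := by
  obtain ⟨x, y, l, r, hm, h1, h2⟩ := h
  obtain ⟨cv, hl, hr⟩ := hRc _ hm
  subst h1 h2
  unfold Nb
  rw [List.map_append, List.map_append, List.map_append, List.map_append,
    map_chi_replicate hl, map_chi_replicate hr]
  exact bnd_le _ _ cv l.length r.length
    (fun h0 => hne _ hm (List.length_eq_zero_iff.mp h0))

lemma Nb_append (A : Set α) (P Q : List α) :
    Nb A (P ++ Q) = Nb A P + Nb A Q +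
      ebd (P.map (chi A)).getLast? (Q.map (chi A)).head? := by
  unfold Nb
  rw [List.map_append, bnd_append]

lemma over_of_Nb_zero {A B : Set α} {u : List α}
    (hu : Over (A ∪ B) u) (hN : Nb A u = 0) : Over A u ∨ Over B u := by
  have hall := bnd_zero_all_eq hN
  by_cases hA : ∃ x ∈ u, x ∈ A
  · obtain ⟨x₀, hx₀u, hx₀⟩ := hA
    refine Or.inl fun x hx => ?_
    have := hall (chi A x) (List.mem_map_of_mem hx) (chi A x₀) (List.mem_map_of_mem hx₀u)
    rw [chi_eq_true.mpr hx₀] at this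
    exact chi_eq_true.mp this
  · push_neg at hA
    refine Or.inr fun x hx => ?_
    rcases hu x hx with h | h
    · exact absurd h (hA x hx)
    · exact h

/-- Words over a single alphabet only admit steps from the corresponding system. -/
lemma step_of_over {A B : Set α} (hdisj : Disjoint A B)
    {Ra Rb : Set (List α × List α)}
    (hRb : ∀ p ∈ Rb, Over B p.1 ∧ Over B p.2) (hneb : ∀ p ∈ Rb, p.1 ≠ [])
    {u v : List α} (hu : Over A u) (h : Step (Ra ∪ Rb) u v) :
    Step Ra u v := by
  rcases step_union.mp h with h' | h'
  · exact h'
  · exfalso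
    obtain ⟨x, y, l, r, hm, h1, h2⟩ := h'
    have hl : l ≠ [] := hneb _ hm
    have hhd : l.head hl ∈ l := List.head_mem hl
    have hinu : l.head hl ∈ u := by
      rw [h1]
      exact List.mem_append_left _ (List.mem_append_right _ hhd)
    exact Set.disjoint_left.mp hdisj (hu _ hinu) ((hRb _ hm).1 _ hhd)

lemma step_ra_over {A : Set α} {Ra : Set (List α × List α)}
    (hRa : ∀ p ∈ Ra, Over A p.1 ∧ Over A p.2) {u v : List α}
    (hu : Over A u) (h : Step Ra u v) : Over A v :=
  step_over hRa (subset_refl A) hu h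

/-- Accessibility of single-alphabet words under the union system. -/
lemma acc_single {A B : Set α} (hdisj : Disjoint A B)
    {Ra Rb : Set (List α × List α)}
    (hRa : ∀ p ∈ Ra, Over A p.1 ∧ Over A p.2)
    (hRb : ∀ p ∈ Rb, Over B p.1 ∧ Over B p.2) (hneb : ∀ p ∈ Rb, p.1 ≠ [])
    (hterma : ¬ ∃ f : ℕ → List α,
      (∀ n : ℕ, Over A (f n)) ∧ ∀ n : ℕ, Step Ra (f n) (f (n + 1))) :
    ∀ u : List α, Over A u → Acc (fun v u => Step (Ra ∪ Rb) u v) u := by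
  intro u
  induction acc_of_no_chain hterma u with
  | intro u _ ih =>
    intro hu
    refine Acc.intro u fun v hv => ?_
    have hstep : Step Ra u v := step_of_over hdisj hRb hneb hu hv
    exact ih v ⟨hstep, hu⟩ (step_ra_over hRa hu hstep)


lemma ebd_le_one (a b : Option Bool) : ebd a b ≤ 1 := by
  rcases a with _ | a
  · rw [ebd_none_left]; omega
  rcases b with _ | b
  · rw [ebd_none_right]; omega
  show (if a = b then 0 else 1) ≤ 1
  split <;> omega

lemma ebd_eq_one {a b : Option Bool} (h : ebd a b = 1) :
    ∃ ca cb, a = some ca ∧ b = some cb ∧ ca ≠ cb := by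
  rcases a with _ | ca
  · rw [ebd_none_left] at h; omega
  rcases b with _ | cb
  · rw [ebd_none_right] at h; omega
  refine ⟨ca, cb, rfl, rfl, ?_⟩
  intro hne
  rw [show ebd (some ca) (some cb) = if ca = cb then 0 else 1 from rfl, if_pos hne] at h
  omega

/-- A step from a glued word `P ++ Q` with an alphabet boundary at the junction
happens entirely within `P` or within `Q`. -/
lemma step_glue {A : Set α} {R : Set (List α × List α)}
    (hRc : ∀ p ∈ R, ∃ cv : Bool, (∀ x ∈ p.1, chi A x = cv) ∧ (∀ x ∈ p.2, chi A x = cv))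
    (hne : ∀ p ∈ R, p.1 ≠ []) {P Q v : List α} {cp cq : Bool}
    (hcp : (P.map (chi A)).getLast? = some cp)
    (hcq : (Q.map (chi A)).head? = some cq)
    (hpq : cp ≠ cq) (h : Step R (P ++ Q) v) :
    (∃ P', Step R P P' ∧ v = P' ++ Q) ∨ (∃ Q', Step R Q Q' ∧ v = P ++ Q') := by
  obtain ⟨x, y, l, r, hm, h1, h2⟩ := h
  obtain ⟨cv, hlc, _⟩ := hRc _ hm
  have hlne := hne _ hm
  by_cases hcv : cv = cq
  · -- marker: the last letter of P
    rcases P.eq_nil_or_concat with rfl | ⟨P₀, a, rfl⟩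
    · simp at hcp
    rw [List.concat_eq_append] at hcp h1 ⊢
    have hcpa : chi A a = cp := by
      rw [List.map_append, List.map_singleton, List.getLast?_concat] at hcp
      exact Option.some_injective _ hcp
    have hal : ∀ b ∈ l, b ∉ [a] := by
      intro b hb hba
      rw [List.mem_singleton] at hba
      subst hba
      apply hpq
      rw [← hcpa, hlc _ hb, hcv]
    have h1' : x ++ l ++ y = P₀ ++ [a] ++ Q := h1.symm
    rcases two_redex h1' hlne (by simp) hal with ⟨m, hm1, hm2⟩ | ⟨m, hm1, hm2⟩
    · -- P₀ = x ++ l ++ m, y = m ++ [a] ++ Q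
      refine Or.inl ⟨x ++ r ++ (m ++ [a]),
        ⟨x, m ++ [a], l, r, hm, by rw [hm1]; simp, by simp⟩, ?_⟩
      rw [h2, hm2]; simp
    · -- x = P₀ ++ [a] ++ m, Q = m ++ l ++ y
      refine Or.inr ⟨m ++ r ++ y, ⟨m, y, l, r, hm, by rw [hm2], by simp⟩, ?_⟩
      rw [h2, hm1]; simp
  · -- marker: the first letter of Q
    rcases Q with _ | ⟨b, Q₀⟩
    · simp at hcq
    have hcqb : chi A b = cq := by
      rw [List.map_cons, List.head?_cons] at hcq
      exact Option.some_injective _ hcq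
    have hbl : ∀ c ∈ l, c ∉ [b] := by
      intro c hc hcb
      rw [List.mem_singleton] at hcb
      subst hcb
      exact hcv ((hlc c hc).symm.trans hcqb)
    have h1' : x ++ l ++ y = P ++ [b] ++ Q₀ := by
      rw [← h1]; simp
    rcases two_redex h1' hlne (by simp) hbl with ⟨m, hm1, hm2⟩ | ⟨m, hm1, hm2⟩
    · -- P = x ++ l ++ m, y = m ++ [b] ++ Q₀
      refine Or.inl ⟨x ++ r ++ m, ⟨x, m, l, r, hm, by rw [hm1], by simp⟩, ?_⟩
      rw [h2, hm2]; simp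
    · -- x = P ++ [b] ++ m, Q₀ = m ++ l ++ y
      refine Or.inr ⟨(b :: m) ++ r ++ y,
        ⟨b :: m, y, l, r, hm, by rw [hm2]; simp, by simp⟩, ?_⟩
      rw [h2, hm1]; simp


/-- Gluing accessibility across an alphabet boundary. -/
lemma acc_glue {A U : Set α} {R : Set (List α × List α)}
    (hRU : ∀ p ∈ R, Over U p.1 ∧ Over U p.2)
    (hRc : ∀ p ∈ R, ∃ cv : Bool, (∀ x ∈ p.1, chi A x = cv) ∧ (∀ x ∈ p.2, chi A x = cv))
    (hne : ∀ p ∈ R, p.1 ≠ []) {n : ℕ}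
    (Hn : ∀ w, Over U w → Nb A w ≤ n → Acc (fun v u => Step R u v) w) :
    ∀ P, Acc (fun v u => Step R u v) P → ∀ Q, Acc (fun v u => Step R u v) Q →
      Over U P → Over U Q → Nb A (P ++ Q) = n + 1 →
      ebd ((P.map (chi A)).getLast?) ((Q.map (chi A)).head?) = 1 →
      Acc (fun v u => Step R u v) (P ++ Q) := by
  intro P hP
  induction hP with
  | intro P hPs ihP =>
    intro Q hQ
    induction hQ with
    | intro Q hQs ihQ =>
      intro hovP hovQ hN hebd
      refine Acc.intro _ fun v hv => ?_
      have hNv : Nb A v ≤ n + 1 := hN ▸ Nb_mono hRc hne hv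
      have hovv : Over U v :=
        step_over hRU (subset_refl U) (over_append.mpr ⟨hovP, hovQ⟩) hv
      rcases Nat.lt_or_ge (Nb A v) (n + 1) with hlt | hge
      · exact Hn v hovv (by omega)
      have hNveq : Nb A v = n + 1 := le_antisymm hNv hge
      obtain ⟨cp, cq, hcp, hcq, hpq⟩ := ebd_eq_one hebd
      have heP := Nb_append A P Q
      rcases step_glue hRc hne hcp hcq hpq hv with ⟨P', hsP, rfl⟩ | ⟨Q', hsQ, rfl⟩
      · have hNP' : Nb A P' ≤ Nb A P := Nb_mono hRc hne hsP
        have heP' := Nb_append A P' Q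
        have hle' := ebd_le_one ((P'.map (chi A)).getLast?) ((Q.map (chi A)).head?)
        have hovP' : Over U P' := step_over hRU (subset_refl U) hovP hsP
        exact ihP P' hsP Q (Acc.intro Q hQs) hovP' hovQ hNveq (by omega)
      · have hNQ' : Nb A Q' ≤ Nb A Q := Nb_mono hRc hne hsQ
        have heQ' := Nb_append A P Q'
        have hle' := ebd_le_one ((P.map (chi A)).getLast?) ((Q'.map (chi A)).head?)
        have hovQ' : Over U Q' := step_over hRU (subset_refl U) hovQ hsQ
        exact ihQ Q' hsQ hovP hovQ' hNveq (by omega)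

/-- A word with positive boundary count splits at a boundary. -/
lemma Nb_pos_split {A : Set α} {u : List α} (h : Nb A u ≠ 0) :
    ∃ P Q, u = P ++ Q ∧
      ebd ((P.map (chi A)).getLast?) ((Q.map (chi A)).head?) = 1 := by
  induction u with
  | nil => exact absurd rfl h
  | cons x T ihT =>
    cases T with
    | nil => exact absurd rfl h
    | cons y T' =>
      by_cases hxy : chi A x = chi A y
      · have hT : Nb A (y :: T') ≠ 0 := by
          intro h0
          apply h
          show (if chi A x = chi A y then 0 else 1) + bnd ((y :: T').map (chi A)) = 0
          rw [if_pos hxy]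
          show 0 + Nb A (y :: T') = 0
          rw [h0]
        obtain ⟨P, Q, hu, he⟩ := ihT hT
        have hPne : P ≠ [] := by
          rintro rfl
          rw [List.map_nil, List.getLast?_nil, ebd_none_left] at he
          omega
        refine ⟨x :: P, Q, by rw [hu]; rfl, ?_⟩
        have hgl : ((x :: P).map (chi A)).getLast? = (P.map (chi A)).getLast? := by
          cases P with
          | nil => exact absurd rfl hPne
          | cons p P' => rw [List.map_cons, List.map_cons, List.getLast?_cons_cons]
        rw [hgl]
        exact he
      · refine ⟨[x], y :: T', rfl, ?_⟩
        show (if chi A x = chi A y then 0 else 1) = 1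
        rw [if_neg hxy]


section Main

variable {A₁ A₂ : Set α} {R₁ R₂ : Set (List α × List α)}

lemma hRcU (hdisj : Disjoint A₁ A₂)
    (hR₁ : ∀ p ∈ R₁, Over A₁ p.1 ∧ Over A₁ p.2)
    (hR₂ : ∀ p ∈ R₂, Over A₂ p.1 ∧ Over A₂ p.2) :
    ∀ p ∈ R₁ ∪ R₂, ∃ cv : Bool,
      (∀ x ∈ p.1, chi A₁ x = cv) ∧ (∀ x ∈ p.2, chi A₁ x = cv) := by
  rintro p (hp | hp)
  · exact ⟨true, fun x hx => chi_eq_true.mpr ((hR₁ p hp).1 x hx),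
      fun x hx => chi_eq_true.mpr ((hR₁ p hp).2 x hx)⟩
  · exact ⟨false, fun x hx => chi_eq_false.mpr
        (Set.disjoint_right.mp hdisj ((hR₂ p hp).1 x hx)),
      fun x hx => chi_eq_false.mpr (Set.disjoint_right.mp hdisj ((hR₂ p hp).2 x hx))⟩

lemma hRU' (hR₁ : ∀ p ∈ R₁, Over A₁ p.1 ∧ Over A₁ p.2)
    (hR₂ : ∀ p ∈ R₂, Over A₂ p.1 ∧ Over A₂ p.2) :
    ∀ p ∈ R₁ ∪ R₂, Over (A₁ ∪ A₂) p.1 ∧ Over (A₁ ∪ A₂) p.2 := by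
  rintro p (hp | hp)
  · exact ⟨over_mono Set.subset_union_left (hR₁ p hp).1,
      over_mono Set.subset_union_left (hR₁ p hp).2⟩
  · exact ⟨over_mono Set.subset_union_right (hR₂ p hp).1,
      over_mono Set.subset_union_right (hR₂ p hp).2⟩

lemma acc_union (hdisj : Disjoint A₁ A₂)
    (hR₁ : ∀ p ∈ R₁, Over A₁ p.1 ∧ Over A₁ p.2)
    (hR₂ : ∀ p ∈ R₂, Over A₂ p.1 ∧ Over A₂ p.2)
    (hne₁ : ∀ p ∈ R₁, p.1 ≠ []) (hne₂ : ∀ p ∈ R₂, p.1 ≠ [])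
    (hterm₁ : ¬ ∃ f : ℕ → List α,
      (∀ n : ℕ, Over A₁ (f n)) ∧ ∀ n : ℕ, Step R₁ (f n) (f (n + 1)))
    (hterm₂ : ¬ ∃ f : ℕ → List α,
      (∀ n : ℕ, Over A₂ (f n)) ∧ ∀ n : ℕ, Step R₂ (f n) (f (n + 1))) :
    ∀ (n : ℕ) (u : List α), Over (A₁ ∪ A₂) u → Nb A₁ u ≤ n →
      Acc (fun v u => Step (R₁ ∪ R₂) u v) u := by
  have hneU : ∀ p ∈ R₁ ∪ R₂, p.1 ≠ [] := by
    rintro p (hp | hp)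
    · exact hne₁ p hp
    · exact hne₂ p hp
  intro n
  induction n with
  | zero =>
    intro u hov hN
    rcases over_of_Nb_zero hov (Nat.le_zero.mp hN) with h | h
    · exact acc_single hdisj hR₁ hR₂ hne₂ hterm₁ u h
    · have := acc_single hdisj.symm hR₂ hR₁ hne₁ hterm₂ u h
      rwa [Set.union_comm R₂ R₁] at this
  | succ n ih =>
    intro u hov hN
    rcases Nat.lt_or_ge (Nb A₁ u) (n + 1) with hlt | hge
    · exact ih u hov (by omega)
    have hNeq : Nb A₁ u = n + 1 := le_antisymm hN hge
    have hu0 : Nb A₁ u ≠ 0 := by omega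
    obtain ⟨P, Q, rfl, hebd⟩ := Nb_pos_split hu0
    have heP := Nb_append A₁ P Q
    have hovP : Over (A₁ ∪ A₂) P := (over_append.mp hov).1
    have hovQ : Over (A₁ ∪ A₂) Q := (over_append.mp hov).2
    exact acc_glue (hRU' hR₁ hR₂) (hRcU hdisj hR₁ hR₂) hneU ih
      P (ih P hovP (by omega)) Q (ih Q hovQ (by omega)) hovP hovQ hNeq hebd


/-- Splitting a multi-step reduction at a marker letter. -/
lemma rtg_split {A : Set α} {R : Set (List α × List α)}
    (hR : ∀ p ∈ R, Over A p.1 ∧ Over A p.2) (hne : ∀ p ∈ R, p.1 ≠ [])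
    {a : α} (ha : a ∉ A) {p q v : List α}
    (h : Relation.ReflTransGen (Step R) (p ++ a :: q) v) :
    ∃ p' q', v = p' ++ a :: q' ∧ Relation.ReflTransGen (Step R) p p' ∧
      Relation.ReflTransGen (Step R) q q' := by
  induction h with
  | refl => exact ⟨p, q, rfl, Relation.ReflTransGen.refl, Relation.ReflTransGen.refl⟩
  | tail _ hstep ih =>
    obtain ⟨p', q', rfl, hp, hq⟩ := ih
    rcases split_step hR hne ha hstep with ⟨p'', hs, rfl⟩ | ⟨q'', hs, rfl⟩
    · exact ⟨p'', q', rfl, hp.tail hs, hq⟩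
    · exact ⟨p', q'', rfl, hp, hq.tail hs⟩

lemma rtg_marker_left {R : Set (List α × List α)} {p p' : List α} (a : α) (q : List α)
    (h : Relation.ReflTransGen (Step R) p p') :
    Relation.ReflTransGen (Step R) (p ++ a :: q) (p' ++ a :: q) :=
  rtg_append_right (a :: q) h

lemma rtg_marker_right {R : Set (List α × List α)} {q q' : List α} (p : List α) (a : α)
    (h : Relation.ReflTransGen (Step R) q q') :
    Relation.ReflTransGen (Step R) (p ++ a :: q) (p ++ a :: q') := by
  have := rtg_append_left (p ++ [a]) h
  rw [List.append_assoc, List.append_assoc] at this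
  simpa using this

/-- Confluence of one system on words over the combined alphabet. -/
lemma conf_one {A : Set α} {R : Set (List α × List α)}
    (hR : ∀ p ∈ R, Over A p.1 ∧ Over A p.2) (hne : ∀ p ∈ R, p.1 ≠ [])
    (hconf : ∀ u v w : List α, Over A u →
      Relation.ReflTransGen (Step R) u v → Relation.ReflTransGen (Step R) u w →
      ∃ z : List α, Relation.ReflTransGen (Step R) v z ∧
        Relation.ReflTransGen (Step R) w z) :
    ∀ (k : ℕ) (u : List α), (u.countP fun x => ! chi A x) = k →
      ∀ v w : List α,
      Relation.ReflTransGen (Step R) u v → Relation.ReflTransGen (Step R) u w →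
      ∃ z : List α, Relation.ReflTransGen (Step R) v z ∧
        Relation.ReflTransGen (Step R) w z := by
  intro k
  induction k using Nat.strong_induction_on with
  | _ k ihk =>
    intro u hk v w hv hw
    rcases Nat.eq_zero_or_pos k with rfl | hpos
    · -- all letters in A
      have hA : Over A u := by
        intro x hx
        have := List.countP_eq_zero.mp hk x hx
        simp only [Bool.not_eq_true'] at this
        exact chi_eq_true.mp (by simpa using this)
      exact hconf u v w hA hv hw
    · have : 0 < u.countP fun x => ! chi A x := hk ▸ hpos
      obtain ⟨a, hau, hca⟩ := List.countP_pos_iff.mp this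
      have ha : a ∉ A := by
        intro h
        rw [chi_eq_true.mpr h] at hca
        simp at hca
      obtain ⟨p, q, rfl⟩ := List.append_of_mem hau
      have hcount : (p.countP fun x => ! chi A x) + (q.countP fun x => ! chi A x) + 1 = k := by
        rw [← hk, List.countP_append, List.countP_cons, hca]
        simp only [if_true]
        omega
      obtain ⟨pv, qv, rfl, hpv, hqv⟩ := rtg_split hR hne ha hv
      obtain ⟨pw, qw, rfl, hpw, hqw⟩ := rtg_split hR hne ha hw
      obtain ⟨zp, hzp1, hzp2⟩ := ihk _ (by omega) p rfl pv pw hpv hpw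
      obtain ⟨zq, hzq1, hzq2⟩ := ihk _ (by omega) q rfl qv qw hqv hqw
      refine ⟨zp ++ a :: zq, ?_, ?_⟩
      · exact (rtg_marker_left a qv hzp1).trans (rtg_marker_right zp a hzq1)
      · exact (rtg_marker_left a qw hzp2).trans (rtg_marker_right zp a hzq2)

/-- Disjoint redexes from the two systems commute in one step. -/
lemma comm_step (hdisj : Disjoint A₁ A₂)
    (hR₁ : ∀ p ∈ R₁, Over A₁ p.1 ∧ Over A₁ p.2)
    (hR₂ : ∀ p ∈ R₂, Over A₂ p.1 ∧ Over A₂ p.2)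
    (hne₁ : ∀ p ∈ R₁, p.1 ≠ []) (hne₂ : ∀ p ∈ R₂, p.1 ≠ [])
    {u v w : List α} (h1 : Step R₁ u v) (h2 : Step R₂ u w) :
    ∃ z, Step R₂ v z ∧ Step R₁ w z := by
  obtain ⟨x₁, y₁, l₁, r₁, hm₁, hu₁, hv⟩ := h1
  obtain ⟨x₂, y₂, l₂, r₂, hm₂, hu₂, hw⟩ := h2
  have heq : x₁ ++ l₁ ++ y₁ = x₂ ++ l₂ ++ y₂ := by rw [← hu₁, ← hu₂]
  have hdl : ∀ a ∈ l₁, a ∉ l₂ := by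
    intro a ha hal₂
    exact Set.disjoint_left.mp hdisj ((hR₁ _ hm₁).1 a ha) ((hR₂ _ hm₂).1 a hal₂)
  rcases two_redex heq (hne₁ _ hm₁) (hne₂ _ hm₂) hdl with ⟨m, hx₂, hy₁⟩ | ⟨m, hx₁, hy₂⟩
  · refine ⟨x₁ ++ r₁ ++ m ++ r₂ ++ y₂,
      ⟨x₁ ++ r₁ ++ m, y₂, l₂, r₂, hm₂, by rw [hv, hy₁]; simp, by simp⟩,
      ⟨x₁, m ++ r₂ ++ y₂, l₁, r₁, hm₁, by rw [hw, hx₂]; simp, by simp⟩⟩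
  · refine ⟨x₂ ++ r₂ ++ m ++ r₁ ++ y₁,
      ⟨x₂, m ++ r₁ ++ y₁, l₂, r₂, hm₂, by rw [hv, hx₁]; simp, by simp⟩,
      ⟨x₂ ++ r₂ ++ m, y₁, l₁, r₁, hm₁, by rw [hw, hy₂]; simp, by simp⟩⟩


/-- Local confluence of the union system. -/
lemma local_conf (hdisj : Disjoint A₁ A₂)
    (hR₁ : ∀ p ∈ R₁, Over A₁ p.1 ∧ Over A₁ p.2)
    (hR₂ : ∀ p ∈ R₂, Over A₂ p.1 ∧ Over A₂ p.2)
    (hne₁ : ∀ p ∈ R₁, p.1 ≠ []) (hne₂ : ∀ p ∈ R₂, p.1 ≠ [])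
    (hconf₁ : ∀ u v w : List α, Over A₁ u →
      Relation.ReflTransGen (Step R₁) u v → Relation.ReflTransGen (Step R₁) u w →
      ∃ z : List α, Relation.ReflTransGen (Step R₁) v z ∧
        Relation.ReflTransGen (Step R₁) w z)
    (hconf₂ : ∀ u v w : List α, Over A₂ u →
      Relation.ReflTransGen (Step R₂) u v → Relation.ReflTransGen (Step R₂) u w →
      ∃ z : List α, Relation.ReflTransGen (Step R₂) v z ∧
        Relation.ReflTransGen (Step R₂) w z)
    {u v w : List α} (hu : Over (A₁ ∪ A₂) u)
    (hv : Step (R₁ ∪ R₂) u v) (hw : Step (R₁ ∪ R₂) u w) :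
    ∃ z, Relation.ReflTransGen (Step (R₁ ∪ R₂)) v z ∧
      Relation.ReflTransGen (Step (R₁ ∪ R₂)) w z := by
  have lift₁ : ∀ {a b : List α}, Relation.ReflTransGen (Step R₁) a b →
      Relation.ReflTransGen (Step (R₁ ∪ R₂)) a b :=
    fun h => Relation.ReflTransGen.mono (r := Step R₁) (fun _ _ hs => step_mono Set.subset_union_left hs) _ _ h
  have lift₂ : ∀ {a b : List α}, Relation.ReflTransGen (Step R₂) a b →
      Relation.ReflTransGen (Step (R₁ ∪ R₂)) a b :=
    fun h => Relation.ReflTransGen.mono (r := Step R₂) (fun _ _ hs => step_mono Set.subset_union_right hs) _ _ h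
  rcases step_union.mp hv with hv' | hv' <;> rcases step_union.mp hw with hw' | hw'
  · obtain ⟨z, hz1, hz2⟩ := conf_one hR₁ hne₁ hconf₁ _ u rfl v w
      (Relation.ReflTransGen.single hv') (Relation.ReflTransGen.single hw')
    exact ⟨z, lift₁ hz1, lift₁ hz2⟩
  · obtain ⟨z, hz1, hz2⟩ := comm_step hdisj hR₁ hR₂ hne₁ hne₂ hv' hw'
    exact ⟨z, lift₂ (Relation.ReflTransGen.single hz1),
      lift₁ (Relation.ReflTransGen.single hz2)⟩
  · obtain ⟨z, hz1, hz2⟩ := comm_step hdisj hR₁ hR₂ hne₁ hne₂ hw' hv'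
    exact ⟨z, lift₁ (Relation.ReflTransGen.single hz2),
      lift₂ (Relation.ReflTransGen.single hz1)⟩
  · obtain ⟨z, hz1, hz2⟩ := conf_one hR₂ hne₂ hconf₂ _ u rfl v w
      (Relation.ReflTransGen.single hv') (Relation.ReflTransGen.single hw')
    exact ⟨z, lift₂ hz1, lift₂ hz2⟩


/-- Newman's lemma argument: confluence of the union system. -/
lemma conf_union (hdisj : Disjoint A₁ A₂)
    (hR₁ : ∀ p ∈ R₁, Over A₁ p.1 ∧ Over A₁ p.2)
    (hR₂ : ∀ p ∈ R₂, Over A₂ p.1 ∧ Over A₂ p.2)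
    (hne₁ : ∀ p ∈ R₁, p.1 ≠ []) (hne₂ : ∀ p ∈ R₂, p.1 ≠ [])
    (hterm₁ : ¬ ∃ f : ℕ → List α,
      (∀ n : ℕ, Over A₁ (f n)) ∧ ∀ n : ℕ, Step R₁ (f n) (f (n + 1)))
    (hterm₂ : ¬ ∃ f : ℕ → List α,
      (∀ n : ℕ, Over A₂ (f n)) ∧ ∀ n : ℕ, Step R₂ (f n) (f (n + 1)))
    (hconf₁ : ∀ u v w : List α, Over A₁ u →
      Relation.ReflTransGen (Step R₁) u v → Relation.ReflTransGen (Step R₁) u w →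
      ∃ z : List α, Relation.ReflTransGen (Step R₁) v z ∧
        Relation.ReflTransGen (Step R₁) w z)
    (hconf₂ : ∀ u v w : List α, Over A₂ u →
      Relation.ReflTransGen (Step R₂) u v → Relation.ReflTransGen (Step R₂) u w →
      ∃ z : List α, Relation.ReflTransGen (Step R₂) v z ∧
        Relation.ReflTransGen (Step R₂) w z) :
    ∀ u v w : List α, Over (A₁ ∪ A₂) u →
      Relation.ReflTransGen (Step (R₁ ∪ R₂)) u v →
      Relation.ReflTransGen (Step (R₁ ∪ R₂)) u w →
      ∃ z : List α, Relation.ReflTransGen (Step (R₁ ∪ R₂)) v z ∧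
        Relation.ReflTransGen (Step (R₁ ∪ R₂)) w z := by
  have hpres : ∀ {u v : List α}, Over (A₁ ∪ A₂) u → Step (R₁ ∪ R₂) u v →
      Over (A₁ ∪ A₂) v :=
    fun hu h => step_over (hRU' hR₁ hR₂) (subset_refl _) hu h
  suffices H : ∀ u : List α, Acc (fun v u => Step (R₁ ∪ R₂) u v) u →
      Over (A₁ ∪ A₂) u → ∀ v w : List α,
      Relation.ReflTransGen (Step (R₁ ∪ R₂)) u v →
      Relation.ReflTransGen (Step (R₁ ∪ R₂)) u w →
      ∃ z : List α, Relation.ReflTransGen (Step (R₁ ∪ R₂)) v z ∧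
        Relation.ReflTransGen (Step (R₁ ∪ R₂)) w z by
    intro u v w hu hv hw
    exact H u (acc_union hdisj hR₁ hR₂ hne₁ hne₂ hterm₁ hterm₂ (Nb A₁ u) u hu le_rfl)
      hu v w hv hw
  intro u hac
  induction hac with
  | intro u _ ih =>
    intro hu v w hv hw
    rcases hv.cases_head with rfl | ⟨v₁, hv₁, hv₁'⟩
    · exact ⟨w, hw, Relation.ReflTransGen.refl⟩
    rcases hw.cases_head with rfl | ⟨w₁, hw₁, hw₁'⟩
    · exact ⟨v, Relation.ReflTransGen.refl, hv⟩
    obtain ⟨z₀, hz₁, hz₂⟩ :=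
      local_conf hdisj hR₁ hR₂ hne₁ hne₂ hconf₁ hconf₂ hu hv₁ hw₁
    obtain ⟨z₁, hvz₁, hz₀z₁⟩ := ih v₁ hv₁ (hpres hu hv₁) v z₀ hv₁' hz₁
    obtain ⟨z₂, hwz₂, hz₁z₂⟩ := ih w₁ hw₁ (hpres hu hw₁) w z₁ hw₁' (hz₂.trans hz₀z₁)
    exact ⟨z₂, hvz₁.trans hz₁z₂, hwz₂⟩

end Main

end S13

/-- If `(A₁, R₁)` and `(A₂, R₂)` are complete rewriting systems on disjoint
alphabets `A₁` and `A₂`, then the union system `(A₁ ∪ A₂, R₁ ∪ R₂)` is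
complete (terminating and confluent). -/
theorem stmt_13 {α : Type*} [Fintype α] (A₁ A₂ : Set α) (hdisj : Disjoint A₁ A₂)
    (R₁ R₂ : Set (List α × List α))
    (hR₁ : ∀ p ∈ R₁, Over A₁ p.1 ∧ Over A₁ p.2)
    (hR₂ : ∀ p ∈ R₂, Over A₂ p.1 ∧ Over A₂ p.2)
    (hterm₁ : ¬ ∃ f : ℕ → List α,
      (∀ n : ℕ, Over A₁ (f n)) ∧ ∀ n : ℕ, Step R₁ (f n) (f (n + 1)))
    (hconf₁ : ∀ u v w : List α, Over A₁ u →
      Relation.ReflTransGen (Step R₁) u v → Relation.ReflTransGen (Step R₁) u w →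
      ∃ z : List α, Relation.ReflTransGen (Step R₁) v z ∧
        Relation.ReflTransGen (Step R₁) w z)
    (hterm₂ : ¬ ∃ f : ℕ → List α,
      (∀ n : ℕ, Over A₂ (f n)) ∧ ∀ n : ℕ, Step R₂ (f n) (f (n + 1)))
    (hconf₂ : ∀ u v w : List α, Over A₂ u →
      Relation.ReflTransGen (Step R₂) u v → Relation.ReflTransGen (Step R₂) u w →
      ∃ z : List α, Relation.ReflTransGen (Step R₂) v z ∧
        Relation.ReflTransGen (Step R₂) w z) :
    (¬ ∃ f : ℕ → List α,
      (∀ n : ℕ, Over (A₁ ∪ A₂) (f n)) ∧ ∀ n : ℕ, Step (R₁ ∪ R₂) (f n) (f (n + 1))) ∧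
    (∀ u v w : List α, Over (A₁ ∪ A₂) u →
      Relation.ReflTransGen (Step (R₁ ∪ R₂)) u v →
      Relation.ReflTransGen (Step (R₁ ∪ R₂)) u w →
      ∃ z : List α, Relation.ReflTransGen (Step (R₁ ∪ R₂)) v z ∧
        Relation.ReflTransGen (Step (R₁ ∪ R₂)) w z) := by
  have hne₁ : ∀ p ∈ R₁, p.1 ≠ [] := S13.lhs_ne_nil hR₁ hterm₁
  have hne₂ : ∀ p ∈ R₂, p.1 ≠ [] := S13.lhs_ne_nil hR₂ hterm₂
  constructor
  · rintro ⟨f, hovf, hstepf⟩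
    exact S13.no_chain_of_acc
      (S13.acc_union hdisj hR₁ hR₂ hne₁ hne₂ hterm₁ hterm₂ (S13.Nb A₁ (f 0)) (f 0)
        (hovf 0) le_rfl) f rfl hstepf
  · exact S13.conf_union hdisj hR₁ hR₂ hne₁ hne₂ hterm₁ hterm₂ hconf₁ hconf₂
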